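/- With v the map associated to (m, n, w, α, β) as in Definition 4 (α negative, α and β non-commensurable, m,n coprime), for all f, g ∈ K(x)[y]: (1) v(f+g) ≥ min(v(f), v(g)); (2) if v(f) ≠ v(g) then v(f+g) = min(v(f), v(g)); (3) if v(f) = v(g) ≠ ∞ then there exists a unique λ ∈ K with v(f + λg) > v(f). -/

import Mathlib

open Polynomial

/-- The value of the term `a·y^j·w^i` (with `p = (i,j)`) under the map associated to
`(m, n, w, α, β)`: `-v_∞(a)·mα + jnα + iβ`, where `-v_∞(a) = intDegree a`. -/
noncomputable def termWeight (K : Type*) [Field K] (m n : ℕ) (α β : ℤ ×ₗ ℤ)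
    (p : ℕ × ℕ) (a : RatFunc K) : ℤ ×ₗ ℤ :=
  (a.intDegree * (m : ℤ)) • α + ((p.2 : ℤ) * (n : ℤ)) • α + (p.1 : ℤ) • β

section Helpers

variable {K : Type*} [Field K]

lemma tw_inj {m n : ℕ} (hm : 0 < m) (hmn : Nat.Coprime m n)
    {α β : ℤ ×ₗ ℤ} (hα : α < 0) (hβ : β ≠ 0)
    (hcom : ∀ a b : ℤ, a ≠ 0 → b ≠ 0 → a • α ≠ b • β)
    {p q : ℕ × ℕ} (hp : p.2 < m) (hq : q.2 < m) {a b : RatFunc K}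
    (h : termWeight K m n α β p a = termWeight K m n α β q b) :
    p = q ∧ a.intDegree = b.intDegree := by
  unfold termWeight at h
  set d := a.intDegree with hd
  set e := b.intDegree with he
  have h2 : ((d * m + (p.2 : ℤ) * n) - (e * m + (q.2 : ℤ) * n)) • α
      = ((q.1 : ℤ) - (p.1 : ℤ)) • β := by
    rw [sub_smul, sub_smul, add_smul, add_smul]
    rw [sub_eq_sub_iff_add_eq_add]
    linear_combination (norm := abel) h
  have hγ0 : ∀ (k : ℤ) (γ : ℤ ×ₗ ℤ), γ ≠ 0 → k • γ = 0 → k = 0 := by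
    intro k γ hγ hk
    by_contra hk0
    exact hγ (zsmul_right_injective (G := ℤ ×ₗ ℤ) hk0 (by show k • γ = k • 0; rw [zsmul_zero]; exact hk))
  by_cases hB : ((q.1 : ℤ) - (p.1 : ℤ)) = 0
  · rw [hB, zero_smul] at h2
    have hA : (d * m + (p.2 : ℤ) * n) - (e * m + (q.2 : ℤ) * n) = 0 :=
      hγ0 _ α (ne_of_lt hα) h2
    have hA' : (d - e) * m = ((q.2 : ℤ) - (p.2 : ℤ)) * n := by ring_nf; linarith [hA]
    have hco : IsCoprime (m : ℤ) (n : ℤ) := Int.isCoprime_iff_gcd_eq_one.mpr hmn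
    have hdvd : (m : ℤ) ∣ ((q.2 : ℤ) - (p.2 : ℤ)) * n := ⟨d - e, by linarith [hA']⟩
    have hdvd2 : (m : ℤ) ∣ ((q.2 : ℤ) - (p.2 : ℤ)) := hco.dvd_of_dvd_mul_right hdvd
    have hj : ((q.2 : ℤ) - (p.2 : ℤ)) = 0 := by
      refine Int.eq_zero_of_abs_lt_dvd hdvd2 ?_
      rw [abs_lt]
      omega
    have hj' : p.2 = q.2 := by omega
    have hde : d = e := by
      have h0 : (d - e) * m = 0 := by rw [hA', hj, zero_mul]
      have hm' : (m : ℤ) ≠ 0 := by positivity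
      have := mul_eq_zero.mp h0
      omega
    have hi : p.1 = q.1 := by omega
    exact ⟨Prod.ext hi hj', hde⟩
  · by_cases hA : (d * m + (p.2 : ℤ) * n) - (e * m + (q.2 : ℤ) * n) = 0
    · rw [hA, zero_smul] at h2
      exact absurd (hγ0 _ β hβ h2.symm) hB
    · exact absurd h2 (hcom _ _ hA hB)

lemma tw_congr {m n : ℕ} {α β : ℤ ×ₗ ℤ} {p : ℕ × ℕ}
    {a b : RatFunc K} (h : a.intDegree = b.intDegree) :
    termWeight K m n α β p a = termWeight K m n α β p b := by
  unfold termWeight; rw [h]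

lemma tw_lt {m n : ℕ} (hm : 0 < m) {α β : ℤ ×ₗ ℤ}
    (hα : α < 0) {p : ℕ × ℕ} {a b : RatFunc K}
    (h : b.intDegree < a.intDegree) :
    termWeight K m n α β p a < termWeight K m n α β p b := by
  unfold termWeight
  refine add_lt_add_of_lt_of_le ?_ le_rfl
  refine add_lt_add_of_lt_of_le ?_ le_rfl
  have hmul : b.intDegree * (m : ℤ) < a.intDegree * (m : ℤ) :=
    mul_lt_mul_of_pos_right h (by exact_mod_cast hm)
  have h2 := zsmul_lt_zsmul_left (neg_pos.mpr hα) hmul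
  simp only [zsmul_neg] at h2
  exact neg_lt_neg_iff.mp h2

lemma tw_le {m n : ℕ} (hm : 0 < m) {α β : ℤ ×ₗ ℤ}
    (hα : α < 0) {p : ℕ × ℕ} {a b : RatFunc K}
    (h : b.intDegree ≤ a.intDegree) :
    termWeight K m n α β p a ≤ termWeight K m n α β p b := by
  rcases eq_or_lt_of_le h with h | h
  · exact le_of_eq (tw_congr h.symm)
  · exact le_of_lt (tw_lt hm hα h)

lemma tw_C_mul {m n : ℕ} {α β : ℤ ×ₗ ℤ} {p : ℕ × ℕ}
    {l : K} (hl : l ≠ 0) (b : RatFunc K) :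
    termWeight K m n α β p (RatFunc.C l * b) = termWeight K m n α β p b := by
  rcases eq_or_ne b 0 with rfl | hb
  · rw [mul_zero]
  · refine tw_congr ?_
    rw [RatFunc.intDegree_mul (by simpa using hl) hb, RatFunc.intDegree_C, zero_add]

lemma intDegree_add_eq_left {a b : RatFunc K} (ha : a ≠ 0)
    (h : b.intDegree < a.intDegree) : (a + b).intDegree = a.intDegree := by
  rcases eq_or_ne b 0 with rfl | hb
  · rw [add_zero]
  have hab : a + b ≠ 0 := by
    intro h0
    have ha' : a = -b := by linear_combination h0
    rw [ha', RatFunc.intDegree_neg] at h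
    exact lt_irrefl _ h
  have hle : (a + b).intDegree ≤ a.intDegree := by
    have := RatFunc.intDegree_add_le hb hab
    simp only [sup_le_iff, le_max_iff] at this
    omega
  have hge : a.intDegree ≤ (a + b).intDegree := by
    have hb' : (-b) ≠ 0 := neg_ne_zero.mpr hb
    have h2 : (a + b) + (-b) ≠ 0 := by simpa using ha
    have := RatFunc.intDegree_add_le hb' h2
    simp only [add_neg_cancel_right, le_max_iff, RatFunc.intDegree_neg] at this
    omega
  omega

lemma intDegree_algebraMap_div {f g : K[X]} (hf : f ≠ 0) (hg : g ≠ 0) :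
    (algebraMap K[X] (RatFunc K) f / algebraMap K[X] (RatFunc K) g).intDegree
      = (f.natDegree : ℤ) - g.natDegree := by
  have hf' := RatFunc.algebraMap_ne_zero (K := K) hf
  have hg' := RatFunc.algebraMap_ne_zero (K := K) hg
  have hx : algebraMap K[X] (RatFunc K) f / algebraMap K[X] (RatFunc K) g ≠ 0 :=
    div_ne_zero hf' hg'
  have h1 : (algebraMap K[X] (RatFunc K) f / algebraMap K[X] (RatFunc K) g)
      * algebraMap K[X] (RatFunc K) g = algebraMap K[X] (RatFunc K) f :=
    div_mul_cancel₀ _ hg'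
  have h2 := RatFunc.intDegree_mul hx hg'
  rw [h1, RatFunc.intDegree_polynomial, RatFunc.intDegree_polynomial] at h2
  omega

/-- existence part of the residue lemma, for `q` of intDegree 0 -/
lemma exists_cancel {q : RatFunc K} (hq : q ≠ 0)
    (hd : q.intDegree = 0) :
    ∃ l : K, l ≠ 0 ∧ (q + RatFunc.C l = 0 ∨ (q + RatFunc.C l).intDegree < 0) := by
  have hnum : q.num ≠ 0 := RatFunc.num_ne_zero hq
  have hden : q.denom ≠ 0 := q.denom_ne_zero
  set l : K := -(q.num.leadingCoeff / q.denom.leadingCoeff) with hl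
  have hlc : q.denom.leadingCoeff ≠ 0 := leadingCoeff_ne_zero.mpr hden
  have hlcn : q.num.leadingCoeff ≠ 0 := leadingCoeff_ne_zero.mpr hnum
  have hl0 : l ≠ 0 := by
    simp only [hl, ne_eq, neg_eq_zero, _root_.div_eq_zero_iff, not_or]
    exact ⟨hlcn, hlc⟩
  refine ⟨l, hl0, ?_⟩
  have hndeg : q.num.natDegree = q.denom.natDegree := by
    have : (q.num.natDegree : ℤ) - q.denom.natDegree = 0 := hd
    omega
  have hg' := RatFunc.algebraMap_ne_zero (K := K) hden
  set N : K[X] := q.num + Polynomial.C l * q.denom with hN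
  have hqCl : q + RatFunc.C l
      = algebraMap K[X] (RatFunc K) N / algebraMap K[X] (RatFunc K) q.denom := by
    rw [hN, ← RatFunc.algebraMap_C l, map_add, map_mul, add_div,
      mul_div_cancel_right₀ _ hg', RatFunc.num_div_denom]
  rcases eq_or_ne N 0 with hN0 | hN0
  · left; rw [hqCl, hN0, map_zero, zero_div]
  · right
    have hdegN : N.degree < q.num.degree := by
      have hNe : N = q.num - Polynomial.C (q.num.leadingCoeff / q.denom.leadingCoeff)
          * q.denom := by
        rw [hN, hl, map_neg]; ring
      rw [hNe]
      apply degree_sub_lt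
      · rw [degree_C_mul (by exact div_ne_zero hlcn hlc), degree_eq_natDegree hnum,
          degree_eq_natDegree hden, hndeg]
      · exact hnum
      · rw [leadingCoeff_mul, leadingCoeff_C, div_mul_cancel₀ _ hlc]
    have hnat : N.natDegree < q.num.natDegree := natDegree_lt_natDegree hN0 hdegN
    rw [hqCl, intDegree_algebraMap_div hN0 hden]
    omega

/-- the residue lemma -/
lemma resid {a b : RatFunc K} (ha : a ≠ 0) (hb : b ≠ 0)
    (hd : a.intDegree = b.intDegree) :
    ∃! l : K, (a + RatFunc.C l * b = 0 ∨ (a + RatFunc.C l * b).intDegree < a.intDegree) := by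
  set q : RatFunc K := a / b with hq
  have hq0 : q ≠ 0 := div_ne_zero ha hb
  have hbinv : b⁻¹ ≠ 0 := inv_ne_zero hb
  have hdinv : (b⁻¹ : RatFunc K).intDegree = -b.intDegree := by
    have h1 : b * b⁻¹ = 1 := mul_inv_cancel₀ hb
    have h2 := RatFunc.intDegree_mul hb hbinv
    rw [h1, RatFunc.intDegree_one] at h2
    omega
  have hqd : q.intDegree = 0 := by
    rw [hq, div_eq_mul_inv, RatFunc.intDegree_mul ha hbinv, hdinv]
    omega
  have key : ∀ l : K, (a + RatFunc.C l * b = 0 ∨ (a + RatFunc.C l * b).intDegree < a.intDegree)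
      ↔ (q + RatFunc.C l = 0 ∨ (q + RatFunc.C l).intDegree < 0) := by
    intro l
    have hfac : a + RatFunc.C l * b = (q + RatFunc.C l) * b := by
      rw [hq]; field_simp
    constructor
    · rintro (h | h)
      · left
        rw [hfac] at h
        rcases mul_eq_zero.mp h with h | h
        · exact h
        · exact absurd h hb
      · rcases eq_or_ne (q + RatFunc.C l) 0 with h0 | h0
        · exact Or.inl h0
        · right
          rw [hfac, RatFunc.intDegree_mul h0 hb] at h
          omega
    · rintro (h | h)
      · left; rw [hfac, h, zero_mul]
      · right
        have h0 : q + RatFunc.C l ≠ 0 := by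
          intro h0; rw [h0, RatFunc.intDegree_zero] at h; exact lt_irrefl _ h
        rw [hfac, RatFunc.intDegree_mul h0 hb]
        omega
  obtain ⟨l, hl0, hl⟩ := exists_cancel hq0 hqd
  refine ⟨l, (key l).mpr hl, ?_⟩
  intro y hy
  by_contra hne
  have hl' := (key l).mpr hl
  have hC : RatFunc.C (y - l) ≠ 0 := by
    rw [← RatFunc.algebraMap_C]
    exact RatFunc.algebraMap_ne_zero (Polynomial.C_ne_zero.mpr (sub_ne_zero_of_ne hne))
  set u := a + RatFunc.C y * b with hu
  set t := a + RatFunc.C l * b with ht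
  have hut : u - t = RatFunc.C (y - l) * b := by rw [hu, ht, map_sub]; ring
  have hs0 : u - t ≠ 0 := hut ▸ mul_ne_zero hC hb
  have hdyl : (u - t).intDegree = a.intDegree := by
    rw [hut, RatFunc.intDegree_mul hC hb, RatFunc.intDegree_C]
    omega
  rcases eq_or_ne u 0 with hu0 | hu0
  · have ht0 : t ≠ 0 := by intro h; rw [hu0, h, sub_zero] at hs0; exact hs0 rfl
    have htd : t.intDegree < a.intDegree := hl'.resolve_left ht0
    rw [hu0, zero_sub, RatFunc.intDegree_neg] at hdyl
    omega
  rcases eq_or_ne t 0 with ht0 | ht0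
  · have hud : u.intDegree < a.intDegree := hy.resolve_left hu0
    rw [ht0, sub_zero] at hdyl
    omega
  · have hud : u.intDegree < a.intDegree := hy.resolve_left hu0
    have htd : t.intDegree < a.intDegree := hl'.resolve_left ht0
    have hle : (u - t).intDegree ≤ max u.intDegree (-t).intDegree := by
      rw [sub_eq_add_neg]
      exact RatFunc.intDegree_add_le (neg_ne_zero.mpr ht0) (by rw [← sub_eq_add_neg]; exact hs0)
    rw [RatFunc.intDegree_neg] at hle
    simp only [le_max_iff] at hle
    omega

lemma exp_add (w : Polynomial (RatFunc K)) (cf cg : (ℕ × ℕ) →₀ RatFunc K) :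
    (cf + cg).sum (fun p a => Polynomial.C a * X ^ p.2 * w ^ p.1)
      = cf.sum (fun p a => Polynomial.C a * X ^ p.2 * w ^ p.1)
        + cg.sum (fun p a => Polynomial.C a * X ^ p.2 * w ^ p.1) := by
  apply Finsupp.sum_add_index' (by intro a; simp)
  intro p b1 b2
  rw [map_add]; ring

lemma exp_smul (w : Polynomial (RatFunc K)) (l : RatFunc K) (cg : (ℕ × ℕ) →₀ RatFunc K) :
    (l • cg).sum (fun p a => Polynomial.C a * X ^ p.2 * w ^ p.1)
      = Polynomial.C l * cg.sum (fun p a => Polynomial.C a * X ^ p.2 * w ^ p.1) := by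
  rw [Finsupp.sum_smul_index (by intro i; simp), Finsupp.mul_sum]
  apply Finsupp.sum_congr
  intro p _
  rw [map_mul]; ring

end Helpers
theorem stmt9 (K : Type*) [Field K] (m n : ℕ) (hm : 0 < m) (hn : 0 < n)
    (hmn : Nat.Coprime m n)
    (w : Polynomial (RatFunc K)) (hw : w.Monic) (hdeg : w.natDegree = m)
    (α β : ℤ ×ₗ ℤ) (hαneg : α < 0) (hβ : β ≠ 0)
    (hind : ∀ (k : ℤ) (γ : ℤ ×ₗ ℤ), 2 ≤ k → α ≠ k • γ)
    (hcom : ∀ a b : ℤ, a ≠ 0 → b ≠ 0 → a • α ≠ b • β)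
    (v : Polynomial (RatFunc K) → WithTop (ℤ ×ₗ ℤ))
    -- every `f` has a `w`-expansion
    (hexp : ∀ f : Polynomial (RatFunc K), ∃ c : (ℕ × ℕ) →₀ RatFunc K,
      (∀ p ∈ c.support, p.2 < m) ∧
      f = c.sum (fun p a => Polynomial.C a * X ^ p.2 * w ^ p.1))
    -- `v(f)` is the minimum of the term values of the `w`-expansion of `f`
    (hv : ∀ (f : Polynomial (RatFunc K)) (c : (ℕ × ℕ) →₀ RatFunc K),
      (∀ p ∈ c.support, p.2 < m) →
      f = c.sum (fun p a => Polynomial.C a * X ^ p.2 * w ^ p.1) →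
      v f = c.support.inf (fun p => ((termWeight K m n α β p (c p) : WithTop (ℤ ×ₗ ℤ))))) :
    (∀ f g : Polynomial (RatFunc K), min (v f) (v g) ≤ v (f + g)) ∧
    (∀ f g : Polynomial (RatFunc K), v f ≠ v g → v (f + g) = min (v f) (v g)) ∧
    (∀ f g : Polynomial (RatFunc K), v f = v g → v f ≠ ⊤ →
      ∃! lam : K, v f < v (f + Polynomial.C (RatFunc.C lam) * g)) := by
  classical
  have part1 : ∀ f g : Polynomial (RatFunc K), min (v f) (v g) ≤ v (f + g) := by
    intro f g
    obtain ⟨cf, hcf, hf⟩ := hexp f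
    obtain ⟨cg, hcg, hg⟩ := hexp g
    have hvf := hv f cf hcf hf
    have hvg := hv g cg hcg hg
    have hsupp : ∀ p ∈ (cf + cg).support, p.2 < m := by
      intro p hp
      rcases Finset.mem_union.mp (Finsupp.support_add hp) with h | h
      exacts [hcf p h, hcg p h]
    have hvfg := hv (f + g) (cf + cg) hsupp (by rw [exp_add, ← hf, ← hg])
    rw [hvfg]
    apply Finset.le_inf
    intro p hp
    have hcp : (cf + cg) p ≠ 0 := Finsupp.mem_support_iff.mp hp
    have happ : (cf + cg) p = cf p + cg p := Finsupp.add_apply cf cg p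
    by_cases h1 : cf p = 0
    · have h2 : cg p ≠ 0 := by rw [happ, h1, zero_add] at hcp; exact hcp
      have he : (cf + cg) p = cg p := by rw [happ, h1, zero_add]
      rw [he]
      refine le_trans (min_le_right _ _) ?_
      rw [hvg]
      exact Finset.inf_le (Finsupp.mem_support_iff.mpr h2)
    · by_cases h2 : cg p = 0
      · have he : (cf + cg) p = cf p := by rw [happ, h2, add_zero]
        rw [he]
        refine le_trans (min_le_left _ _) ?_
        rw [hvf]
        exact Finset.inf_le (Finsupp.mem_support_iff.mpr h1)
      · have hd := RatFunc.intDegree_add_le h2 (happ ▸ hcp)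
        simp only [le_max_iff] at hd
        have hstep : min (↑(termWeight K m n α β p (cf p)) : WithTop (ℤ ×ₗ ℤ))
            (↑(termWeight K m n α β p (cg p)))
            ≤ ↑(termWeight K m n α β p ((cf + cg) p)) := by
          rw [happ]
          rcases hd with hd | hd
          · refine le_trans (min_le_left _ _) ?_
            exact WithTop.coe_le_coe.mpr (tw_le hm hαneg hd)
          · refine le_trans (min_le_right _ _) ?_
            exact WithTop.coe_le_coe.mpr (tw_le hm hαneg hd)
        refine le_trans (min_le_min ?_ ?_) hstep
        · rw [hvf]; exact Finset.inf_le (Finsupp.mem_support_iff.mpr h1)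
        · rw [hvg]; exact Finset.inf_le (Finsupp.mem_support_iff.mpr h2)
  have key : ∀ f g : Polynomial (RatFunc K), v f < v g → v (f + g) = v f := by
    intro f g hlt
    obtain ⟨cf, hcf, hf⟩ := hexp f
    obtain ⟨cg, hcg, hg⟩ := hexp g
    have hvf := hv f cf hcf hf
    have hvg := hv g cg hcg hg
    have hftop : v f ≠ ⊤ := ne_top_of_lt hlt
    have hne : cf.support.Nonempty := by
      rcases Finset.eq_empty_or_nonempty cf.support with h | h
      · rw [h, Finset.inf_empty] at hvf; exact absurd hvf hftop
      · exact h
    obtain ⟨p₀, hp₀, hinff⟩ := Finset.exists_mem_eq_inf cf.support hne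
      (fun p => ((termWeight K m n α β p (cf p) : WithTop (ℤ ×ₗ ℤ))))
    have hvf' : v f = ↑(termWeight K m n α β p₀ (cf p₀)) := by rw [hvf, hinff]
    have hfa : cf p₀ ≠ 0 := Finsupp.mem_support_iff.mp hp₀
    have hsupp : ∀ p ∈ (cf + cg).support, p.2 < m := by
      intro p hp
      rcases Finset.mem_union.mp (Finsupp.support_add hp) with h | h
      exacts [hcf p h, hcg p h]
    have hvfg := hv (f + g) (cf + cg) hsupp (by rw [exp_add, ← hf, ← hg])
    have happ : (cf + cg) p₀ = cf p₀ + cg p₀ := Finsupp.add_apply cf cg p₀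
    have hub : v (f + g) ≤ v f := by
      by_cases hg0 : cg p₀ = 0
      · have hcp : (cf + cg) p₀ = cf p₀ := by rw [happ, hg0, add_zero]
        have hmem : p₀ ∈ (cf + cg).support :=
          Finsupp.mem_support_iff.mpr (by rw [hcp]; exact hfa)
        have h1 : v (f + g) ≤ ↑(termWeight K m n α β p₀ ((cf + cg) p₀)) := by
          rw [hvfg]; exact Finset.inf_le hmem
        rw [hcp] at h1
        rw [hvf']
        exact h1
      · have h1 : termWeight K m n α β p₀ (cf p₀) < termWeight K m n α β p₀ (cg p₀) := by
        -- coe strict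
          have hcoe : (↑(termWeight K m n α β p₀ (cf p₀)) : WithTop (ℤ ×ₗ ℤ))
              < ↑(termWeight K m n α β p₀ (cg p₀)) := by
            rw [← hvf']
            refine lt_of_lt_of_le hlt ?_
            rw [hvg]
            exact Finset.inf_le (Finsupp.mem_support_iff.mpr hg0)
          exact WithTop.coe_lt_coe.mp hcoe
        have hdlt : (cg p₀).intDegree < (cf p₀).intDegree := by
          by_contra hge
          push_neg at hge
          exact absurd h1 (not_lt.mpr (tw_le hm hαneg hge))
        have hdsum : (cf p₀ + cg p₀).intDegree = (cf p₀).intDegree :=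
          intDegree_add_eq_left hfa hdlt
        have hcne : (cf + cg) p₀ ≠ 0 := by
          rw [happ]
          intro h0
          have hcc : cf p₀ = -cg p₀ := by linear_combination h0
          rw [hcc, RatFunc.intDegree_neg] at hdlt
          exact lt_irrefl _ hdlt
        have h2 : v (f + g) ≤ ↑(termWeight K m n α β p₀ ((cf + cg) p₀)) := by
          rw [hvfg]; exact Finset.inf_le (Finsupp.mem_support_iff.mpr hcne)
        have h3 : termWeight K m n α β p₀ ((cf + cg) p₀)
            = termWeight K m n α β p₀ (cf p₀) := by
          rw [happ]; exact tw_congr hdsum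
        rw [h3] at h2
        rw [hvf']
        exact h2
    have hlb := part1 f g
    rw [min_eq_left hlt.le] at hlb
    exact le_antisymm hub hlb
  have part2 : ∀ f g : Polynomial (RatFunc K), v f ≠ v g → v (f + g) = min (v f) (v g) := by
    intro f g hne
    rcases hne.lt_or_gt with h | h
    · rw [key f g h, min_eq_left h.le]
    · rw [add_comm, key g f h, min_eq_right h.le]
  refine ⟨part1, part2, ?_⟩
  intro f g hfg hftop
  obtain ⟨cf, hcf, hf⟩ := hexp f
  obtain ⟨cg, hcg, hg⟩ := hexp g
  have hvf := hv f cf hcf hf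
  have hvg := hv g cg hcg hg
  have hgtop : v g ≠ ⊤ := hfg ▸ hftop
  have hnef : cf.support.Nonempty := by
    rcases Finset.eq_empty_or_nonempty cf.support with h | h
    · rw [h, Finset.inf_empty] at hvf; exact absurd hvf hftop
    · exact h
  have hneg : cg.support.Nonempty := by
    rcases Finset.eq_empty_or_nonempty cg.support with h | h
    · rw [h, Finset.inf_empty] at hvg; exact absurd hvg hgtop
    · exact h
  obtain ⟨p₀, hp₀, hinff⟩ := Finset.exists_mem_eq_inf cf.support hnef
    (fun p => ((termWeight K m n α β p (cf p) : WithTop (ℤ ×ₗ ℤ))))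
  obtain ⟨q₀, hq₀, hinfg⟩ := Finset.exists_mem_eq_inf cg.support hneg
    (fun p => ((termWeight K m n α β p (cg p) : WithTop (ℤ ×ₗ ℤ))))
  have hvf' : v f = ↑(termWeight K m n α β p₀ (cf p₀)) := by rw [hvf, hinff]
  have hvg' : v g = ↑(termWeight K m n α β q₀ (cg q₀)) := by rw [hvg, hinfg]
  have heq : termWeight K m n α β p₀ (cf p₀) = termWeight K m n α β q₀ (cg q₀) := by
    have : (↑(termWeight K m n α β p₀ (cf p₀)) : WithTop (ℤ ×ₗ ℤ))
        = ↑(termWeight K m n α β q₀ (cg q₀)) := by rw [← hvf', ← hvg', hfg]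
    exact_mod_cast this
  obtain ⟨hpq, hdeq⟩ := tw_inj hm hmn hαneg hβ hcom (hcf p₀ hp₀) (hcg q₀ hq₀) heq
  subst hpq
  have ha : cf p₀ ≠ 0 := Finsupp.mem_support_iff.mp hp₀
  have hb : cg p₀ ≠ 0 := Finsupp.mem_support_iff.mp hq₀
  obtain ⟨l₀, hl₀cond, hluniq⟩ := resid ha hb hdeq
  -- lam = 0 never works
  have hzero : ¬ v f < v (f + Polynomial.C (RatFunc.C (0 : K)) * g) := by
    have h0 : f + Polynomial.C (RatFunc.C (0 : K)) * g = f := by simp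
    rw [h0]
    exact lt_irrefl _
  -- the main equivalence for nonzero lam
  have main : ∀ l : K, l ≠ 0 →
      (v f < v (f + Polynomial.C (RatFunc.C l) * g) ↔
        (cf p₀ + RatFunc.C l * cg p₀ = 0 ∨
          (cf p₀ + RatFunc.C l * cg p₀).intDegree < (cf p₀).intDegree)) := by
    intro l hl
    have hL : RatFunc.C l ≠ 0 := by
      rw [← RatFunc.algebraMap_C]
      exact RatFunc.algebraMap_ne_zero (Polynomial.C_ne_zero.mpr hl)
    set c : (ℕ × ℕ) →₀ RatFunc K := cf + RatFunc.C l • cg with hc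
    have hsupp : ∀ p ∈ c.support, p.2 < m := by
      intro p hp
      rcases Finset.mem_union.mp (Finsupp.support_add hp) with h | h
      · exact hcf p h
      · exact hcg p (Finsupp.support_smul h)
    have hvc := hv (f + Polynomial.C (RatFunc.C l) * g) c hsupp
      (by rw [hc, exp_add, exp_smul, ← hf, ← hg])
    have happ : ∀ p, c p = cf p + RatFunc.C l * cg p := by
      intro p
      rw [hc]
      simp [Finsupp.add_apply, Finsupp.smul_apply, smul_eq_mul]
    constructor
    · intro hlt
      by_contra hcon
      push_neg at hcon
      obtain ⟨hN0, hNd⟩ := hcon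
      have hLb : RatFunc.C l * cg p₀ ≠ 0 := mul_ne_zero hL hb
      have hdLb : (RatFunc.C l * cg p₀).intDegree = (cf p₀).intDegree := by
        rw [RatFunc.intDegree_mul hL hb, RatFunc.intDegree_C, zero_add]
        omega
      have hNle : (cf p₀ + RatFunc.C l * cg p₀).intDegree ≤ (cf p₀).intDegree := by
        have hle := RatFunc.intDegree_add_le hLb hN0
        rw [hdLb] at hle
        simpa using hle
      have hNdeg : (cf p₀ + RatFunc.C l * cg p₀).intDegree = (cf p₀).intDegree :=
        le_antisymm hNle hNd
      have htw : termWeight K m n α β p₀ (c p₀) = termWeight K m n α β p₀ (cf p₀) := by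
        rw [happ p₀]; exact tw_congr hNdeg
      have hp₀c : p₀ ∈ c.support := Finsupp.mem_support_iff.mpr (by rw [happ p₀]; exact hN0)
      have hle2 : v (f + Polynomial.C (RatFunc.C l) * g)
          ≤ ↑(termWeight K m n α β p₀ (c p₀)) := by
        rw [hvc]; exact Finset.inf_le hp₀c
      rw [htw, ← hvf'] at hle2
      exact absurd hlt (not_lt.mpr hle2)
    · intro hcond
      rw [hvc]
      rw [Finset.lt_inf_iff (lt_of_le_of_ne le_top hftop)]
      intro p hp
      have hcp : c p ≠ 0 := Finsupp.mem_support_iff.mp hp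
      rcases eq_or_ne p p₀ with rfl | hppne
      · rcases hcond with h0 | hdlt
        · exact absurd ((happ p).trans h0) hcp
        · rw [hvf']
          apply WithTop.coe_lt_coe.mpr
          have hd2 : (c p).intDegree < (cf p).intDegree := by rw [happ p]; exact hdlt
          exact tw_lt hm hαneg hd2
      · -- p ≠ p₀ : every term is strictly bigger than v f
        have hstrict_f : cf p ≠ 0 → v f < ↑(termWeight K m n α β p (cf p)) := by
          intro h
          refine lt_of_le_of_ne ?_ ?_
          · rw [hvf]; exact Finset.inf_le (Finsupp.mem_support_iff.mpr h)
          · intro hEq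
            have hEq' : termWeight K m n α β p₀ (cf p₀) = termWeight K m n α β p (cf p) := by
              have := hvf'.symm.trans hEq
              exact_mod_cast this
            exact hppne (tw_inj hm hmn hαneg hβ hcom (hcf p₀ hp₀) (hsupp p hp) hEq').1.symm
        have hstrict_g : cg p ≠ 0 → v f < ↑(termWeight K m n α β p (cg p)) := by
          intro h
          refine lt_of_le_of_ne ?_ ?_
          · rw [hfg, hvg]; exact Finset.inf_le (Finsupp.mem_support_iff.mpr h)
          · intro hEq
            have hEq2 : v g = ↑(termWeight K m n α β p (cg p)) := by rw [← hfg]; exact hEq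
            have hEq' : termWeight K m n α β p₀ (cg p₀) = termWeight K m n α β p (cg p) := by
              have := hvg'.symm.trans hEq2
              exact_mod_cast this
            exact hppne (tw_inj hm hmn hαneg hβ hcom (hcg p₀ hq₀) (hsupp p hp) hEq').1.symm
        by_cases h1 : cf p = 0
        · have h2 : cg p ≠ 0 := by
            intro h2
            rw [happ p, h1, h2, mul_zero, add_zero] at hcp
            exact hcp rfl
          have he : c p = RatFunc.C l * cg p := by rw [happ p, h1, zero_add]
          have htw : termWeight K m n α β p (c p) = termWeight K m n α β p (cg p) := by
            rw [he]; exact tw_C_mul hl _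
          rw [htw]
          exact hstrict_g h2
        · by_cases h2 : cg p = 0
          · have he : c p = cf p := by rw [happ p, h2, mul_zero, add_zero]
            rw [he]
            exact hstrict_f h1
          · have hLb : RatFunc.C l * cg p ≠ 0 := mul_ne_zero hL h2
            have hcp' : cf p + RatFunc.C l * cg p ≠ 0 := by rw [← happ p]; exact hcp
            have hd := RatFunc.intDegree_add_le hLb hcp'
            simp only [le_max_iff] at hd
            have htwLb : termWeight K m n α β p (RatFunc.C l * cg p)
                = termWeight K m n α β p (cg p) := tw_C_mul hl _
            rcases hd with hd | hd
            · refine lt_of_lt_of_le (hstrict_f h1) ?_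
              apply WithTop.coe_le_coe.mpr
              exact tw_le (a := cf p) (b := c p) hm hαneg (by rw [happ p]; exact hd)
            · refine lt_of_lt_of_le (hstrict_g h2) ?_
              apply WithTop.coe_le_coe.mpr
              rw [← htwLb]
              exact tw_le (a := RatFunc.C l * cg p) (b := c p) hm hαneg
                (by rw [happ p]; exact hd)
  have hl₀ne : l₀ ≠ 0 := by
    intro h0
    rw [h0] at hl₀cond
    simp only [map_zero, zero_mul, add_zero] at hl₀cond
    rcases hl₀cond with h | h
    · exact ha h
    · exact lt_irrefl _ h
  refine ⟨l₀, (main l₀ hl₀ne).mpr hl₀cond, ?_⟩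
  intro y hy
  have hy0 : y ≠ 0 := by
    rintro rfl
    exact hzero hy
  exact hluniq y ((main y hy0).mp hy)
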